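/- Let K be an algebraically closed field and g > 1 an integer with char(K) not dividing 2(2g+1). Let I, J ⊆ M(2g+1) be g-element subsets and b ∈ K with b ≠ 0 and b ≠ −1. Then the set of pairs (λ1, λ2) of nonzero elements of K satisfying the polynomial identity λ1·Η_I(x) + (1/λ1)·Η_{∁I}(x) = λ2·Ψ_{J,b}(x) − (b/λ2)·Ψ_{∁J,b}(x) in K[x] is finite and has at most 9 elements. -/

import Mathlib

open Polynomial Finset

/-- `Mset K n` is the set of `n`-th roots of unity in `K` other than `1`. -/
noncomputable def Mset (K : Type*) [Field K] (n : ℕ) : Finset K :=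
  open scoped Classical in
  (Polynomial.nthRootsFinset n (1 : K)).filter (· ≠ 1)

/-- `EtaP I = ∏_{ε ∈ I} (x - η(ε))` where `η(ε) = 1/(ε - 1)`. -/
noncomputable def EtaP {K : Type*} [Field K] (I : Finset K) : K[X] :=
  ∏ ε ∈ I, (X - C ((ε - 1)⁻¹))

/-- `PsiP I b = ∏_{ε ∈ I} (x + b·η(ε))` where `η(ε) = 1/(ε - 1)`. -/
noncomputable def PsiP {K : Type*} [Field K] (I : Finset K) (b : K) : K[X] :=
  ∏ ε ∈ I, (X + C (b * (ε - 1)⁻¹))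

theorem key_aux {K : Type*} [Field K] (b : K) (hb0 : b ≠ 0) (hb1 : b ≠ -1)
    (A B P Q : K[X]) (hA : A.Monic) (hB : B.Monic) (hP : P.Monic) (hQ : Q.Monic)
    (hPQ : P ≠ Q) :
    {p : K × K | p.1 ≠ 0 ∧ p.2 ≠ 0 ∧
        C p.1 * A + C p.1⁻¹ * B = C p.2 * P - C (b * p.2⁻¹) * Q}.Finite ∧
    {p : K × K | p.1 ≠ 0 ∧ p.2 ≠ 0 ∧
        C p.1 * A + C p.1⁻¹ * B = C p.2 * P - C (b * p.2⁻¹) * Q}.ncard ≤ 9 := by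
  set S : Set (K × K) := {p : K × K | p.1 ≠ 0 ∧ p.2 ≠ 0 ∧
        C p.1 * A + C p.1⁻¹ * B = C p.2 * P - C (b * p.2⁻¹) * Q} with hS
  classical
  -- Step 1: a nonzero 2x2 minor of the coefficients of P, Q
  obtain ⟨i, j, hΔ⟩ : ∃ i j : ℕ, P.coeff i * Q.coeff j - P.coeff j * Q.coeff i ≠ 0 := by
    by_contra h
    push_neg at h
    apply hPQ
    have hQP : Q = C (Q.coeff P.natDegree) * P := by
      ext k
      rw [coeff_C_mul]
      have h1 := h k P.natDegree
      have h2 : P.coeff P.natDegree = 1 := hP.coeff_natDegree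
      linear_combination -h1 - Q.coeff k * h2
    have hlc := congrArg leadingCoeff hQP
    rw [leadingCoeff_mul, leadingCoeff_C, hQ.leadingCoeff, hP.leadingCoeff, mul_one] at hlc
    rw [hQP, ← hlc, map_one, one_mul]
  set Δ : K := P.coeff i * Q.coeff j - P.coeff j * Q.coeff i with hΔd
  set c1 : K := A.coeff i * Q.coeff j - A.coeff j * Q.coeff i with hc1d
  set c2 : K := B.coeff i * Q.coeff j - B.coeff j * Q.coeff i with hc2d
  set d1 : K := A.coeff i * P.coeff j - A.coeff j * P.coeff i with hd1d
  set d2 : K := B.coeff i * P.coeff j - B.coeff j * P.coeff i with hd2d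
  -- basic membership unfolding
  have hmemS : ∀ p : K × K, p ∈ S → p.1 ≠ 0 ∧ p.2 ≠ 0 ∧
      (C p.1 * A + C p.1⁻¹ * B = C p.2 * P - C (b * p.2⁻¹) * Q) := by
    intro p hp; rw [hS] at hp; exact hp
  -- coefficientwise equations for solutions
  have hco : ∀ p : K × K, p ∈ S → ∀ k : ℕ,
      p.1 * A.coeff k + p.1⁻¹ * B.coeff k = p.2 * P.coeff k - (b * p.2⁻¹) * Q.coeff k := by
    intro p hp k
    obtain ⟨-, -, heq⟩ := hmemS p hp
    have := congrArg (fun q : K[X] => q.coeff k) heq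
    simp only [coeff_add, coeff_sub, coeff_C_mul] at this
    exact this
  -- Cramer: the solution components satisfy linear formulas
  have hs1 : ∀ p : K × K, p ∈ S → p.2 * Δ = c1 * p.1 + c2 * p.1⁻¹ := by
    intro p hp
    have Ei := hco p hp i
    have Ej := hco p hp j
    rw [hΔd, hc1d, hc2d]
    linear_combination Q.coeff i * Ej - Q.coeff j * Ei
  have hs2 : ∀ p : K × K, p ∈ S → (b * p.2⁻¹) * Δ = d1 * p.1 + d2 * p.1⁻¹ := by
    intro p hp
    have Ei := hco p hp i
    have Ej := hco p hp j
    rw [hΔd, hd1d, hd2d]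
    linear_combination P.coeff i * Ej - P.coeff j * Ei
  set R : K[X] := C (c1*d1) * X^4 + C (c1*d2 + c2*d1 - b*Δ^2) * X^2 + C (c2*d2) with hRd
  have hval : ∀ p : K × K, p ∈ S →
      c1*d1*p.1^4 + (c1*d2 + c2*d1 - b*Δ^2)*p.1^2 + c2*d2 = 0 := by
    intro p hp
    obtain ⟨hu, hs, -⟩ := hmemS p hp
    have h1 := hs1 p hp
    have h2 := hs2 p hp
    have hu' : p.1 * p.1⁻¹ = 1 := mul_inv_cancel₀ hu
    have hs' : p.2 * p.2⁻¹ = 1 := mul_inv_cancel₀ hs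
    have hprod : (c1*p.1 + c2*p.1⁻¹) * (d1*p.1 + d2*p.1⁻¹) = b*Δ^2 := by
      rw [← h1, ← h2]
      linear_combination (b*Δ^2) * hs'
    linear_combination p.1^2 * hprod - ((c1*d2 + c2*d1)*p.1^2 + c2*d2*(p.1*p.1⁻¹ + 1)) * hu'
  have hfun : ∀ p : K × K, p ∈ S → p.2 = (c1*p.1 + c2*p.1⁻¹)/Δ := by
    intro p hp
    rw [eq_div_iff hΔ]
    exact hs1 p hp
  have main : ∃ T : Finset K, T.card ≤ 9 ∧ ∀ p : K × K, p ∈ S → p.1 ∈ T := by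
    by_cases hR0 : R = 0
    · -- degenerate case: all three coefficients of R vanish
      rw [hRd] at hR0
      have h4 : c1 * d1 = 0 := by
        have := congrArg (fun q : K[X] => q.coeff 4) hR0
        simpa [coeff_X_pow, coeff_mul_X_pow', coeff_C, -map_pow, ← C_pow] using this
      have h0' : c2 * d2 = 0 := by
        have := congrArg (fun q : K[X] => q.coeff 0) hR0
        simpa [coeff_X_pow, coeff_mul_X_pow', coeff_C, -map_pow, ← C_pow] using this
      have h2' : c1*d2 + c2*d1 - b*Δ^2 = 0 := by
        have := congrArg (fun q : K[X] => q.coeff 2) hR0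
        simpa [coeff_X_pow, coeff_mul_X_pow', coeff_C, -map_pow, ← C_pow, sub_eq_zero] using this
      rcases Set.eq_empty_or_nonempty S with hSe | ⟨p0, hp0⟩
      · exact ⟨∅, by norm_num, fun p hp => absurd (hSe ▸ hp) (Set.notMem_empty p)⟩
      · have hsq : ∀ p : K × K, p ∈ S → p.1^2 = p0.1^2 := by
          by_cases hc1 : c1 = 0
          · have hmid : c2 * d1 = b * Δ^2 := by linear_combination h2' - d2 * hc1
            have hbΔ : b * Δ^2 ≠ 0 := mul_ne_zero hb0 (pow_ne_zero 2 hΔ)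
            have hc2 : c2 ≠ 0 := fun h => hbΔ (by rw [← hmid, h, zero_mul])
            have hd2 : d2 = 0 := by
              rcases mul_eq_zero.1 h0' with h | h
              · exact absurd h hc2
              · exact h
            have hGH : ∀ p : K × K, p ∈ S → ∀ k : ℕ,
                p.1^2 * (Δ * A.coeff k + d1 * Q.coeff k) = c2 * P.coeff k - Δ * B.coeff k := by
              intro p hp k
              obtain ⟨hu, -, -⟩ := hmemS p hp
              have Ek := hco p hp k
              have h1 := hs1 p hp
              have h2'' := hs2 p hp
              have hu' : p.1 * p.1⁻¹ = 1 := mul_inv_cancel₀ hu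
              linear_combination (Δ*p.1) * Ek + (p.1*P.coeff k) * h1 - (p.1*Q.coeff k) * h2''
                - (Δ*B.coeff k - c2*P.coeff k) * hu' + (p.1^2*P.coeff k) * hc1
                - (p.1*p.1⁻¹*Q.coeff k) * hd2
            by_cases hG : ∀ k : ℕ, Δ * A.coeff k + d1 * Q.coeff k = 0
            · exfalso
              have hAQ : C Δ * A = C (-d1) * Q := by
                ext k
                rw [coeff_C_mul, coeff_C_mul]
                linear_combination hG k
              have hΔd1 : Δ = -d1 := by
                have hl := congrArg leadingCoeff hAQ
                rwa [leadingCoeff_mul, leadingCoeff_mul, leadingCoeff_C, leadingCoeff_C,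
                  hA.leadingCoeff, hQ.leadingCoeff, mul_one, mul_one] at hl
              have hPB : C c2 * P = C Δ * B := by
                ext k
                rw [coeff_C_mul, coeff_C_mul]
                have h := hGH p0 hp0 k
                rw [hG k, mul_zero] at h
                linear_combination -h
              have hc2Δ : c2 = Δ := by
                have hl := congrArg leadingCoeff hPB
                rwa [leadingCoeff_mul, leadingCoeff_mul, leadingCoeff_C, leadingCoeff_C,
                  hP.leadingCoeff, hB.leadingCoeff, mul_one, mul_one] at hl
              apply hb1
              have hfin2 : b * Δ^2 = (-1) * Δ^2 := by
                linear_combination -hmid + d1*hc2Δ + Δ*hΔd1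
              exact mul_right_cancel₀ (pow_ne_zero 2 hΔ) hfin2
            · push_neg at hG
              obtain ⟨k, hk⟩ := hG
              intro p hp
              have e1 := hGH p hp k
              have e2 := hGH p0 hp0 k
              have hz : (p.1^2 - p0.1^2) * (Δ * A.coeff k + d1 * Q.coeff k) = 0 := by
                linear_combination e1 - e2
              rcases mul_eq_zero.1 hz with h | h
              · exact sub_eq_zero.1 h
              · exact absurd h hk
          · have hd1 : d1 = 0 := by
              rcases mul_eq_zero.1 h4 with h | h
              · exact absurd h hc1
              · exact h
            have hmid : c1 * d2 = b * Δ^2 := by linear_combination h2' - c2 * hd1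
            have hbΔ : b * Δ^2 ≠ 0 := mul_ne_zero hb0 (pow_ne_zero 2 hΔ)
            have hd2 : d2 ≠ 0 := fun h => hbΔ (by rw [← hmid, h, mul_zero])
            have hc2 : c2 = 0 := by
              rcases mul_eq_zero.1 h0' with h | h
              · exact h
              · exact absurd h hd2
            have hGH : ∀ p : K × K, p ∈ S → ∀ k : ℕ,
                p.1^2 * (Δ * A.coeff k - c1 * P.coeff k) = -(d2 * Q.coeff k + Δ * B.coeff k) := by
              intro p hp k
              obtain ⟨hu, -, -⟩ := hmemS p hp
              have Ek := hco p hp k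
              have h1 := hs1 p hp
              have h2'' := hs2 p hp
              have hu' : p.1 * p.1⁻¹ = 1 := mul_inv_cancel₀ hu
              linear_combination (Δ*p.1) * Ek + (p.1*P.coeff k) * h1 - (p.1*Q.coeff k) * h2''
                - (Δ*B.coeff k + d2*Q.coeff k) * hu' + (p.1*p.1⁻¹*P.coeff k) * hc2
                - (p.1^2*Q.coeff k) * hd1
            by_cases hG : ∀ k : ℕ, Δ * A.coeff k - c1 * P.coeff k = 0
            · exfalso
              have hAP : C Δ * A = C c1 * P := by
                ext k
                rw [coeff_C_mul, coeff_C_mul]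
                linear_combination hG k
              have hΔc1 : Δ = c1 := by
                have hl := congrArg leadingCoeff hAP
                rwa [leadingCoeff_mul, leadingCoeff_mul, leadingCoeff_C, leadingCoeff_C,
                  hA.leadingCoeff, hP.leadingCoeff, mul_one, mul_one] at hl
              have hQB : C d2 * Q = C (-Δ) * B := by
                ext k
                rw [coeff_C_mul, coeff_C_mul]
                have h := hGH p0 hp0 k
                rw [hG k, mul_zero] at h
                linear_combination h
              have hd2Δ : d2 = -Δ := by
                have hl := congrArg leadingCoeff hQB
                rwa [leadingCoeff_mul, leadingCoeff_mul, leadingCoeff_C, leadingCoeff_C,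
                  hQ.leadingCoeff, hB.leadingCoeff, mul_one, mul_one] at hl
              apply hb1
              have hfin2 : b * Δ^2 = (-1) * Δ^2 := by
                linear_combination -hmid + c1*hd2Δ + Δ*hΔc1
              exact mul_right_cancel₀ (pow_ne_zero 2 hΔ) hfin2
            · push_neg at hG
              obtain ⟨k, hk⟩ := hG
              intro p hp
              have e1 := hGH p hp k
              have e2 := hGH p0 hp0 k
              have hz : (p.1^2 - p0.1^2) * (Δ * A.coeff k - c1 * P.coeff k) = 0 := by
                linear_combination e1 - e2
              rcases mul_eq_zero.1 hz with h | h
              · exact sub_eq_zero.1 h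
              · exact absurd h hk
        refine ⟨{p0.1, -p0.1}, ?_, ?_⟩
        · exact le_trans (Finset.card_insert_le _ _) (by simp)
        · intro p hp
          have h := hsq p hp
          have hz : (p.1 - p0.1) * (p.1 + p0.1) = 0 := by linear_combination h
          rcases mul_eq_zero.1 hz with h' | h'
          · simp [Finset.mem_insert, sub_eq_zero.1 h']
          · simp [Finset.mem_insert, eq_neg_of_add_eq_zero_left h']
    · refine ⟨R.roots.toFinset, ?_, ?_⟩
      · calc R.roots.toFinset.card ≤ Multiset.card R.roots := R.roots.toFinset_card_le
          _ ≤ R.natDegree := R.card_roots'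
          _ ≤ 4 := by rw [hRd]; compute_degree
          _ ≤ 9 := by norm_num
      · intro p hp
        refine Multiset.mem_toFinset.2 (mem_roots'.2 ⟨hR0, ?_⟩)
        have he : R.eval p.1 = c1*d1*p.1^4 + (c1*d2 + c2*d1 - b*Δ^2)*p.1^2 + c2*d2 := by
          rw [hRd]
          simp only [eval_add, eval_mul, eval_pow, eval_C, eval_X]
        rw [IsRoot, he]
        exact hval p hp
  obtain ⟨T, hT9, hTm⟩ := main
  have hsub : S ⊆ (fun u : K => (u, (c1*u + c2*u⁻¹)/Δ)) '' (T : Set K) := by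
    intro p hp
    refine ⟨p.1, hTm p hp, ?_⟩
    show (p.1, (c1*p.1 + c2*p.1⁻¹)/Δ) = p
    rw [← hfun p hp]
  have hfin : ((fun u : K => (u, (c1*u + c2*u⁻¹)/Δ)) '' (T : Set K)).Finite :=
    T.finite_toSet.image _
  constructor
  · exact hfin.subset hsub
  · calc S.ncard ≤ _ := Set.ncard_le_ncard hsub hfin
      _ ≤ (T : Set K).ncard := Set.ncard_image_le T.finite_toSet
      _ = T.card := Set.ncard_coe_finset T
      _ ≤ 9 := hT9

theorem stmt_17 (K : Type*) [Field K] [IsAlgClosed K] [DecidableEq K]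
    (g : ℕ) (hg : 1 < g)
    (hchar : ((2 * (2 * g + 1) : ℕ) : K) ≠ 0)
    (I J : Finset K) (hI : I ⊆ Mset K (2 * g + 1)) (hJ : J ⊆ Mset K (2 * g + 1))
    (hIcard : I.card = g) (hJcard : J.card = g)
    (b : K) (hb0 : b ≠ 0) (hb1 : b ≠ -1) :
    {p : K × K | p.1 ≠ 0 ∧ p.2 ≠ 0 ∧
        C p.1 * EtaP I + C p.1⁻¹ * EtaP (Mset K (2 * g + 1) \ I) =
          C p.2 * PsiP J b - C (b * p.2⁻¹) * PsiP (Mset K (2 * g + 1) \ J) b}.Finite ∧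
    {p : K × K | p.1 ≠ 0 ∧ p.2 ≠ 0 ∧
        C p.1 * EtaP I + C p.1⁻¹ * EtaP (Mset K (2 * g + 1) \ I) =
          C p.2 * PsiP J b - C (b * p.2⁻¹) * PsiP (Mset K (2 * g + 1) \ J) b}.ncard ≤ 9 := by
  have hJne : J.Nonempty := Finset.card_pos.1 (by rw [hJcard]; omega)
  obtain ⟨ε0, hε0⟩ := hJne
  have hPQ : PsiP J b ≠ PsiP (Mset K (2 * g + 1) \ J) b := by
    intro h
    set x0 : K := -(b * (ε0 - 1)⁻¹) with hx0
    have h1 : (PsiP J b).eval x0 = 0 := by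
      rw [PsiP, eval_prod]
      refine Finset.prod_eq_zero hε0 ?_
      simp [hx0]
    have h2 : (PsiP (Mset K (2 * g + 1) \ J) b).eval x0 ≠ 0 := by
      rw [PsiP, eval_prod]
      refine Finset.prod_ne_zero_iff.2 fun ε hε => ?_
      simp only [eval_add, eval_X, eval_C]
      intro hz
      have hbb : b * (ε - 1)⁻¹ = b * (ε0 - 1)⁻¹ := by linear_combination hz - hx0
      have h3 : (ε - 1)⁻¹ = (ε0 - 1)⁻¹ := mul_left_cancel₀ hb0 hbb
      have h4 : ε = ε0 := by
        have := inv_injective h3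
        linear_combination this
      rw [h4] at hε
      exact (Finset.mem_sdiff.1 hε).2 hε0
    rw [h] at h1
    exact h2 h1
  exact key_aux b hb0 hb1 (EtaP I) (EtaP (Mset K (2 * g + 1) \ I)) (PsiP J b)
    (PsiP (Mset K (2 * g + 1) \ J) b)
    (monic_prod_of_monic _ _ fun _ _ => monic_X_sub_C _)
    (monic_prod_of_monic _ _ fun _ _ => monic_X_sub_C _)
    (monic_prod_of_monic _ _ fun _ _ => monic_X_add_C _)
    (monic_prod_of_monic _ _ fun _ _ => monic_X_add_C _)
    hPQ
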